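/- Let a, b, c ∈ O_K be nonzero with s² = ac - 1 for some s ∈ O_K, |c| > 4|a|, |a| ≥ 2, and let (x, z) ∈ O_K² with z ≠ 0 satisfy az² - cx² = c - a. Set θ = ±(s/a)√(a/c) with sign chosen so that |θ - sx/(az)| ≤ |−θ − sx/(az)|. Then |θ - sx/(az)| ≤ (|s|·|c - a|)/(|a|·√(|ac|)·|z|²) < (21|c|)/(16|a|·|z|²). -/

import Mathlib

set_option maxHeartbeats 1000000 in
/-- With s² = ac - 1, |c| > 4|a|, |a| ≥ 2, az² - cx² = c - a and z ≠ 0, if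
θ = ±(s/a)√(a/c) with sign chosen so that |θ - sx/(az)| ≤ |-θ - sx/(az)|, then
|θ - sx/(az)| ≤ |s||c-a|/(|a|√|ac| |z|²) < 21|c|/(16|a||z|²). -/
theorem stmt_7 (K : Subfield ℂ)
    (hdeg : Module.finrank ℚ K = 2) (him : ∃ z : K, (z : ℂ).im ≠ 0)
    (a b c s x z : K)
    (haint : IsIntegral ℤ a) (hbint : IsIntegral ℤ b) (hcint : IsIntegral ℤ c)
    (hsint : IsIntegral ℤ s) (hxint : IsIntegral ℤ x) (hzint : IsIntegral ℤ z)
    (ha0 : a ≠ 0) (hb0 : b ≠ 0) (hc0 : c ≠ 0) (hz0 : z ≠ 0)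
    (hs : s ^ 2 = a * c - 1)
    (hca : ‖(c : ℂ)‖ > 4 * ‖(a : ℂ)‖) (ha2 : 2 ≤ ‖(a : ℂ)‖)
    (hpell : a * z ^ 2 - c * x ^ 2 = c - a)
    (w : ℂ) (hw : w ^ 2 = (a : ℂ) / (c : ℂ))
    (θ : ℂ) (hθ : θ = ((s : ℂ) / (a : ℂ)) * w ∨ θ = -(((s : ℂ) / (a : ℂ)) * w))
    (hsign : ‖θ - (s : ℂ) * (x : ℂ) / ((a : ℂ) * (z : ℂ))‖ ≤
      ‖-θ - (s : ℂ) * (x : ℂ) / ((a : ℂ) * (z : ℂ))‖) :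
    ‖θ - (s : ℂ) * (x : ℂ) / ((a : ℂ) * (z : ℂ))‖ ≤
      ‖(s : ℂ)‖ * ‖(c : ℂ) - (a : ℂ)‖ /
        (‖(a : ℂ)‖ * Real.sqrt (‖(a : ℂ) * (c : ℂ)‖) * ‖(z : ℂ)‖ ^ 2) ∧
    ‖(s : ℂ)‖ * ‖(c : ℂ) - (a : ℂ)‖ /
        (‖(a : ℂ)‖ * Real.sqrt (‖(a : ℂ) * (c : ℂ)‖) * ‖(z : ℂ)‖ ^ 2) <
      21 * ‖(c : ℂ)‖ / (16 * ‖(a : ℂ)‖ * ‖(z : ℂ)‖ ^ 2) := by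
  have haC : (a : ℂ) ≠ 0 := by exact_mod_cast ha0
  have hcC : (c : ℂ) ≠ 0 := by exact_mod_cast hc0
  have hzC : (z : ℂ) ≠ 0 := by exact_mod_cast hz0
  have hpellC : (a : ℂ) * (z : ℂ) ^ 2 - (c : ℂ) * (x : ℂ) ^ 2 = (c : ℂ) - (a : ℂ) := by
    exact_mod_cast congrArg (fun t : K => (t : ℂ)) hpell
  have hsC : (s : ℂ) ^ 2 = (a : ℂ) * (c : ℂ) - 1 := by
    exact_mod_cast congrArg (fun t : K => (t : ℂ)) hs
  set A' : ℝ := ‖(a : ℂ)‖ with hA'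
  set C' : ℝ := ‖(c : ℂ)‖ with hC'
  set S : ℝ := ‖(s : ℂ)‖ with hS
  set Z : ℝ := ‖(z : ℂ)‖ with hZ
  have hApos : (0:ℝ) < A' := lt_of_lt_of_le (by norm_num) ha2
  have hC8 : (8:ℝ) < C' := by nlinarith
  have hCpos : (0:ℝ) < C' := by linarith
  have hZpos : (0:ℝ) < Z := by
    simpa [hZ] using (norm_pos_iff.mpr hzC)
  have hP16 : (16:ℝ) < A' * C' := by nlinarith
  have habsac : ‖((a:ℂ) * (c:ℂ))‖ = A' * C' := by
    simp [hA', hC', norm_mul]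
  set sp : ℝ := Real.sqrt (‖((a:ℂ) * (c:ℂ))‖) with hsp
  have hsp2 : sp ^ 2 = A' * C' := by
    rw [hsp, habsac, Real.sq_sqrt (by positivity)]
  have hsppos : (0:ℝ) < sp := by
    rw [hsp, habsac]; positivity
  have hsne : (s : ℂ) ≠ 0 := by
    intro h
    rw [h] at hsC
    have h1 : ((a:ℂ)*(c:ℂ)) = 1 := by linear_combination -hsC
    have : ‖((a:ℂ)*(c:ℂ))‖ = 1 := by rw [h1]; simp
    rw [habsac] at this
    nlinarith
  have hSpos : (0:ℝ) < S := by
    simpa [hS] using (norm_pos_iff.mpr hsne)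
  -- θ² and |θ|
  have hθ2 : θ ^ 2 = (s : ℂ) ^ 2 / ((a : ℂ) * (c : ℂ)) := by
    have h0 : (((s:ℂ) / (a:ℂ)) * w) ^ 2 = (s:ℂ) ^ 2 / ((a:ℂ) * (c:ℂ)) := by
      rw [mul_pow, div_pow, hw]
      field_simp
    rcases hθ with h | h
    · rw [h, h0]
    · rw [h, neg_pow, h0]; ring
  have hθabs2 : (‖θ‖) ^ 2 = S ^ 2 / (A' * C') := by
    rw [← norm_pow, hθ2, norm_div, norm_pow, habsac, hS]
  have hθabs : ‖θ‖ = S / sp := by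
    have h1 : ‖θ‖ = Real.sqrt ((‖θ‖) ^ 2) :=
      (Real.sqrt_sq (norm_nonneg _)).symm
    rw [h1, hθabs2, Real.sqrt_div (sq_nonneg S), Real.sqrt_sq hSpos.le, hsp, habsac]
  -- product identity
  set u : ℂ := (s : ℂ) * (x : ℂ) / ((a : ℂ) * (z : ℂ)) with hu
  have hAB : (θ - u) * (-θ - u) =
      -((s:ℂ)^2 * ((c:ℂ) - (a:ℂ))) / ((a:ℂ)^2 * (c:ℂ) * (z:ℂ)^2) := by
    have h1 : (θ - u) * (-θ - u) = u ^ 2 - θ ^ 2 := by ring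
    have step1 : u ^ 2 - (s:ℂ)^2 / ((a:ℂ)*(c:ℂ)) =
        ((s:ℂ)^2 * ((c:ℂ)*(x:ℂ)^2 - (a:ℂ)*(z:ℂ)^2)) / ((a:ℂ)^2 * (c:ℂ) * (z:ℂ)^2) := by
      rw [hu]; field_simp
    have step2 : (c:ℂ)*(x:ℂ)^2 - (a:ℂ)*(z:ℂ)^2 = -((c:ℂ) - (a:ℂ)) := by
      linear_combination -hpellC
    rw [h1, hθ2, step1, step2]
    ring
  have hABabs : ‖((θ - u) * (-θ - u))‖ =
      S ^ 2 * ‖((c:ℂ) - (a:ℂ))‖ / (A' ^ 2 * C' * Z ^ 2) := by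
    rw [hAB, norm_div, norm_neg, norm_mul, norm_mul, norm_mul, norm_pow, norm_pow]
    simp [hA', hC', hS, hZ]
  -- |θ| ≤ |-θ - u|
  have hθleB : ‖θ‖ ≤ ‖(-θ - u)‖ := by
    have h2 : ‖(2 * θ)‖ ≤ ‖(θ - u)‖ + ‖(-θ - u)‖ := by
      have e : (2:ℂ) * θ = (θ - u) + -(-θ - u) := by ring
      rw [e]
      exact (norm_add_le _ _).trans (by rw [norm_neg])
    have h3 : ‖(2 * θ)‖ = 2 * ‖θ‖ := by
      rw [norm_mul]; norm_num
    linarith [hsign]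
  have hθpos : (0:ℝ) < ‖θ‖ := by rw [hθabs]; positivity
  set dca : ℝ := ‖((c:ℂ) - (a:ℂ))‖ with hdca
  have hdca0 : (0:ℝ) ≤ dca := norm_nonneg _
  set T : ℝ := ‖(θ - u)‖ with hT
  have hT0 : (0:ℝ) ≤ T := norm_nonneg _
  -- part 1
  have hpart1 : T ≤ S * dca / (A' * sp * Z ^ 2) := by
    have hkey : T * ‖θ‖ ≤ S ^ 2 * dca / (A' ^ 2 * C' * Z ^ 2) := by
      rw [← hABabs, norm_mul, hT]
      exact mul_le_mul_of_nonneg_left hθleB (norm_nonneg _)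
    rw [hθabs, ← mul_div_assoc,
      div_le_div_iff₀ hsppos (by positivity : (0:ℝ) < A' ^ 2 * C' * Z ^ 2)] at hkey
    have h5 : T * (A' ^ 2 * C' * Z ^ 2) ≤ S * dca * sp := by
      have h6 : S * (T * (A' ^ 2 * C' * Z ^ 2)) ≤ S * (S * dca * sp) :=
        calc S * (T * (A' ^ 2 * C' * Z ^ 2)) = T * S * (A' ^ 2 * C' * Z ^ 2) := by ring
          _ ≤ S ^ 2 * dca * sp := hkey
          _ = S * (S * dca * sp) := by ring
      exact le_of_mul_le_mul_left h6 hSpos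
    rw [le_div_iff₀ (by positivity : (0:ℝ) < A' * sp * Z ^ 2)]
    rw [← mul_le_mul_iff_of_pos_right hsppos]
    have e : T * (A' * sp * Z ^ 2) * sp = T * A' * sp ^ 2 * Z ^ 2 := by ring
    rw [e, hsp2]
    calc T * A' * (A' * C') * Z ^ 2 = T * (A' ^ 2 * C' * Z ^ 2) := by ring
      _ ≤ S * dca * sp := h5
  -- part 2
  have hs1 : S ≤ Real.sqrt (A' * C' + 1) := by
    have hS2 : S ^ 2 ≤ A' * C' + 1 := by
      have h1 : S ^ 2 = ‖((a:ℂ) * (c:ℂ) - 1)‖ := by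
        rw [hS, ← norm_pow, hsC]
      have h2 : ‖((a:ℂ) * (c:ℂ) - 1)‖ ≤
          ‖((a:ℂ) * (c:ℂ))‖ + ‖(1:ℂ)‖ := by
        exact norm_sub_le _ _
      rw [habsac] at h2
      simp at h2
      linarith [h1 ▸ h2]
    calc S = Real.sqrt (S ^ 2) := (Real.sqrt_sq hSpos.le).symm
      _ ≤ Real.sqrt (A' * C' + 1) := Real.sqrt_le_sqrt hS2
  set s1 : ℝ := Real.sqrt (A' * C' + 1) with hs1def
  have hs1pos : (0:ℝ) < s1 := Real.sqrt_pos.mpr (by nlinarith)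
  have h2021 : 20 * s1 ≤ 21 * sp := by
    have h1 : (20 * s1) ^ 2 = 400 * (A' * C' + 1) := by
      rw [mul_pow, hs1def, Real.sq_sqrt (by nlinarith)]; ring
    have h2 : (21 * sp) ^ 2 = 441 * (A' * C') := by
      rw [mul_pow, hsp2]; ring
    nlinarith [h1, h2, hs1pos, hsppos, hP16]
  have hdcalt : dca < 5 / 4 * C' := by
    have h1 : dca ≤ C' + A' := by
      rw [hdca]
      calc ‖((c:ℂ) - (a:ℂ))‖ ≤ ‖(c:ℂ)‖ + ‖(a:ℂ)‖ :=
        norm_sub_le _ _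
        _ = C' + A' := by rw [hC', hA']
    nlinarith
  have hpart2 : S * dca / (A' * sp * Z ^ 2) <
      21 * C' / (16 * A' * Z ^ 2) := by
    rw [div_lt_div_iff₀ (by positivity) (by positivity)]
    have hmain : 16 * (S * dca) < 21 * C' * sp := by
      have e1 : 16 * (S * dca) ≤ 16 * (s1 * dca) := by nlinarith [hs1, hdca0]
      have e2 : 16 * (s1 * dca) < 20 * s1 * C' := by nlinarith [hdcalt, hs1pos]
      have e3 : 20 * s1 * C' ≤ 21 * sp * C' := by nlinarith [h2021, hCpos]
      linarith
    have h7 := mul_lt_mul_of_pos_right hmain (mul_pos hApos (pow_pos hZpos 2))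
    calc S * dca * (16 * A' * Z ^ 2) = 16 * (S * dca) * (A' * Z ^ 2) := by ring
      _ < 21 * C' * sp * (A' * Z ^ 2) := h7
      _ = 21 * C' * (A' * sp * Z ^ 2) := by ring
  exact ⟨hpart1, hpart2⟩
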